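/- Let X be a real inner product space with dim X ≥ 2. Then there is no function f : X → ℝ satisfying f(x+y) = f(x)f(y) - ⟨x,y⟩ for all x, y ∈ X. -/

import Mathlib

open scoped RealInnerProductSpace

theorem stmt_12 {X : Type*} [NormedAddCommGroup X] [InnerProductSpace ℝ X]
    (hdim : 2 ≤ Module.rank ℝ X) :
    ¬ ∃ f : X → ℝ, ∀ x y : X, f (x + y) = f x * f y - ⟪x, y⟫ := by
  rintro ⟨f, hf⟩
  -- key identity
  have key : ∀ x y z : X, ⟪x, y⟫ * (1 - f z) = ⟪y, z⟫ * (1 - f x) := by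
    intro x y z
    have h1 := hf (x + y) z
    have h2 := hf x (y + z)
    rw [add_assoc] at h1
    rw [hf x y] at h1
    rw [hf y z] at h2
    rw [h2] at h1
    simp only [inner_add_left, inner_add_right] at h1
    nlinarith [h1]
  -- get two linearly independent vectors
  have hnt : Nontrivial X := by
    rw [← rank_pos_iff_nontrivial (R := ℝ)]
    exact lt_of_lt_of_le (by norm_num) hdim
  obtain ⟨x, hx⟩ := exists_ne (0 : X)
  obtain ⟨y, hxy⟩ := exists_linearIndependent_pair_of_one_lt_rank
    (lt_of_lt_of_le (by norm_num) hdim) hx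
  -- orthogonalize
  set z : X := y - (⟪x, y⟫ / ‖x‖ ^ 2) • x with hz
  have hnx : ‖x‖ ≠ 0 := norm_ne_zero_iff.mpr hx
  have hxz : ⟪x, z⟫ = 0 := by
    rw [hz, inner_sub_right, real_inner_smul_right, real_inner_self_eq_norm_sq]
    field_simp
    ring
  have hz0 : z ≠ 0 := by
    intro h
    have h' : (⟪x, y⟫ / ‖x‖ ^ 2) • x + (-1 : ℝ) • y = 0 := by
      rw [neg_one_smul]
      rw [hz, sub_eq_zero] at h
      rw [← h]; abel
    have := (LinearIndependent.pair_iff.mp hxy (⟪x, y⟫ / ‖x‖ ^ 2) (-1) h').2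
    norm_num at this
  -- f z = 1 and f (z + z) = 1
  have hfz : f z = 1 := by
    have := key x x z
    rw [hxz, real_inner_self_eq_norm_sq] at this
    have hn2 : ‖x‖ ^ 2 ≠ 0 := pow_ne_zero 2 hnx
    rw [zero_mul] at this
    rcases mul_eq_zero.mp this with h | h
    · exact absurd h hn2
    · linarith
  have hxzz : ⟪x, z + z⟫ = 0 := by rw [inner_add_right, hxz]; ring
  have hfzz : f (z + z) = 1 := by
    have := key x x (z + z)
    rw [hxzz, real_inner_self_eq_norm_sq] at this
    have hn2 : ‖x‖ ^ 2 ≠ 0 := pow_ne_zero 2 hnx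
    rw [zero_mul] at this
    rcases mul_eq_zero.mp this with h | h
    · exact absurd h hn2
    · linarith
  have := hf z z
  rw [hfzz, hfz, real_inner_self_eq_norm_sq] at this
  have : ‖z‖ ^ 2 = 0 := by nlinarith
  exact hz0 (norm_eq_zero.mp (by nlinarith [this]))
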